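/- Define R₀(n) = (λ_G/γ)·(1 + Σ_{ℓ=1}^{n−1} (λ_L/γ)^ℓ ∏_{j=1}^{ℓ}(1 − j/n)) for n ≥ 1 and λ_L, λ_G, γ > 0. If λ_L ≥ γ, then R₀(n) → ∞ as n → ∞. -/

import Mathlib

open Finset Filter

theorem stmt_12 (lamL lamG gam : ℝ) (hL : 0 < lamL) (hG : 0 < lamG) (hg : 0 < gam)
    (hge : gam ≤ lamL) :
    Tendsto (fun n : ℕ =>
        (lamG / gam) * (1 + ∑ ℓ ∈ Finset.Icc 1 (n - 1),
          (lamL / gam) ^ ℓ * ∏ j ∈ Finset.Icc 1 ℓ, (1 - (j : ℝ) / n)))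
      atTop atTop := by
  have hc : 0 < lamG / gam := div_pos hG hg
  have hr : (1:ℝ) ≤ lamL / gam := (one_le_div hg).2 hge
  rw [tendsto_atTop]
  intro b
  obtain ⟨k, hk⟩ : ∃ k : ℕ, b < (lamG / gam) * (1 + k) := by
    obtain ⟨k, hk⟩ := exists_nat_gt (b / (lamG / gam))
    refine ⟨k, ?_⟩
    have := (div_lt_iff₀ hc).1 hk
    nlinarith
  have hlim : Tendsto (fun n : ℕ => (lamG / gam) * (1 + ∑ ℓ ∈ Finset.Icc 1 k,
      ∏ j ∈ Finset.Icc 1 ℓ, (1 - (j : ℝ) / n))) atTop (nhds ((lamG / gam) * (1 + k))) := by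
    have hsum : Tendsto (fun n : ℕ => ∑ ℓ ∈ Finset.Icc 1 k,
        ∏ j ∈ Finset.Icc 1 ℓ, (1 - (j : ℝ) / n)) atTop
        (nhds (∑ ℓ ∈ Finset.Icc 1 k, ∏ j ∈ Finset.Icc 1 ℓ, (1:ℝ))) := by
      apply tendsto_finset_sum
      intro ℓ _
      apply tendsto_finset_prod
      intro j _
      have h0 : Tendsto (fun n : ℕ => (j : ℝ) / n) atTop (nhds 0) :=
        tendsto_const_div_atTop_nhds_zero_nat (j : ℝ)
      have := (tendsto_const_nhds (x := (1:ℝ)) (f := atTop)).sub h0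
      simpa using this
    have : (∑ ℓ ∈ Finset.Icc 1 k, ∏ j ∈ Finset.Icc 1 ℓ, (1:ℝ)) = (k : ℝ) := by
      simp
    rw [this] at hsum
    exact (tendsto_const_nhds.add hsum).const_mul _
  have hev := hlim.eventually (eventually_gt_nhds hk)
  filter_upwards [hev, eventually_ge_atTop (k + 1)] with n hn1 hn2
  have hkn : k ≤ n - 1 := by omega
  have hn0 : 1 ≤ n := by omega
  -- nonnegativity of products for ℓ ≤ n - 1
  have hprod : ∀ ℓ ∈ Finset.Icc 1 (n - 1), 0 ≤ ∏ j ∈ Finset.Icc 1 ℓ, (1 - (j : ℝ) / n) := by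
    intro ℓ hℓ
    apply Finset.prod_nonneg
    intro j hj
    simp only [Finset.mem_Icc] at hℓ hj
    have hjn : (j : ℝ) ≤ n := by
      have : j ≤ n := by omega
      exact_mod_cast this
    have hnpos : (0:ℝ) < n := by positivity
    have : (j : ℝ) / n ≤ 1 := (div_le_one hnpos).2 hjn
    linarith
  have hle : (∑ ℓ ∈ Finset.Icc 1 k, ∏ j ∈ Finset.Icc 1 ℓ, (1 - (j : ℝ) / n)) ≤
      ∑ ℓ ∈ Finset.Icc 1 (n - 1), (lamL / gam) ^ ℓ * ∏ j ∈ Finset.Icc 1 ℓ, (1 - (j : ℝ) / n) := by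
    have hsub : Finset.Icc 1 k ⊆ Finset.Icc 1 (n - 1) :=
      Finset.Icc_subset_Icc_right hkn
    calc (∑ ℓ ∈ Finset.Icc 1 k, ∏ j ∈ Finset.Icc 1 ℓ, (1 - (j : ℝ) / n))
        ≤ ∑ ℓ ∈ Finset.Icc 1 k, (lamL / gam) ^ ℓ * ∏ j ∈ Finset.Icc 1 ℓ, (1 - (j : ℝ) / n) := by
          apply Finset.sum_le_sum
          intro ℓ hℓ
          have hp := hprod ℓ (hsub hℓ)
          have : (1:ℝ) ≤ (lamL / gam) ^ ℓ := one_le_pow₀ hr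
          nlinarith
      _ ≤ ∑ ℓ ∈ Finset.Icc 1 (n - 1), (lamL / gam) ^ ℓ * ∏ j ∈ Finset.Icc 1 ℓ, (1 - (j : ℝ) / n) := by
          apply Finset.sum_le_sum_of_subset_of_nonneg hsub
          intro ℓ hℓ _
          have hp := hprod ℓ hℓ
          have : (0:ℝ) ≤ (lamL / gam) ^ ℓ := by positivity
          positivity
  have := mul_le_mul_of_nonneg_left (by linarith : (1 : ℝ) +
      (∑ ℓ ∈ Finset.Icc 1 k, ∏ j ∈ Finset.Icc 1 ℓ, (1 - (j : ℝ) / n)) ≤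
      1 + ∑ ℓ ∈ Finset.Icc 1 (n - 1), (lamL / gam) ^ ℓ * ∏ j ∈ Finset.Icc 1 ℓ, (1 - (j : ℝ) / n))
      hc.le
  linarith
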